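/- Let (X, 𝒜, μ) be a finite measure space, C ≥ 0, and let (f_n) be measurable functions on X with 0 ≤ f_n ≤ C μ-almost everywhere for every n and f_n → f μ-almost everywhere. Let (g_n) ⊂ L²(μ) converge weakly in L²(μ) to g ∈ L²(μ). Then ∫ f·g² dμ ≤ liminf_n ∫ f_n·g_n² dμ. -/

import Mathlib

open MeasureTheory Filter

private lemma memL2_inner_eq {X : Type*} [MeasurableSpace X] {μ : Measure X}
    {a b : X → ℝ} (ha : MemLp a 2 μ) (hb : MemLp b 2 μ) :
    @inner ℝ _ _ (ha.toLp a) (hb.toLp b) = ∫ x, a x * b x ∂μ := by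
  rw [L2.inner_def]
  refine integral_congr_ae ?_
  filter_upwards [ha.coeFn_toLp, hb.coeFn_toLp] with x hax hbx
  simp [hax, hbx, RCLike.inner_apply, mul_comm]

private lemma memL2_integrable_mul {X : Type*} [MeasurableSpace X] {μ : Measure X}
    {a b : X → ℝ} (ha : MemLp a 2 μ) (hb : MemLp b 2 μ) :
    Integrable (fun x => a x * b x) μ := by
  have h := L2.integrable_inner (𝕜 := ℝ) (ha.toLp a) (hb.toLp b)
  refine h.congr ?_
  filter_upwards [ha.coeFn_toLp, hb.coeFn_toLp] with x hax hbx
  simp [hax, hbx, RCLike.inner_apply, mul_comm]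

/-- On a finite measure space, if `(f_n)` are measurable with `0 ≤ f_n ≤ C` a.e. and
`f_n → f` a.e., and `(g_n) ⊂ L²(μ)` converges weakly in `L²(μ)` to `g ∈ L²(μ)`, then
`∫ f·g² dμ ≤ liminf_n ∫ f_n·g_n² dμ`. -/
theorem stmt12 {X : Type*} [MeasurableSpace X] (μ : Measure X) [IsFiniteMeasure μ]
    (C : ℝ) (hC : 0 ≤ C)
    (f : ℕ → X → ℝ) (flim : X → ℝ)
    (hfmeas : ∀ n, Measurable (f n))
    (hfbd : ∀ n, ∀ᵐ x ∂μ, f n x ∈ Set.Icc (0 : ℝ) C)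
    (hfconv : ∀ᵐ x ∂μ, Tendsto (fun n => f n x) atTop (nhds (flim x)))
    (g : ℕ → X → ℝ) (glim : X → ℝ)
    (hg : ∀ n, MemLp (g n) 2 μ) (hglim : MemLp glim 2 μ)
    (hgweak : ∀ ζ : X → ℝ, MemLp ζ 2 μ →
      Tendsto (fun n => ∫ x, g n x * ζ x ∂μ) atTop (nhds (∫ x, glim x * ζ x ∂μ))) :
    ∫ x, flim x * (glim x) ^ 2 ∂μ ≤
      Filter.atTop.liminf (fun n => ∫ x, f n x * (g n x) ^ 2 ∂μ) := by
  classical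
  have hfbd' : ∀ᵐ x ∂μ, ∀ n, f n x ∈ Set.Icc (0 : ℝ) C := ae_all_iff.2 hfbd
  -- flim is a.e. in [0, C]
  have hflim_bd : ∀ᵐ x ∂μ, flim x ∈ Set.Icc (0 : ℝ) C := by
    filter_upwards [hfbd', hfconv] with x hx hconv
    constructor
    · exact le_of_tendsto_of_tendsto tendsto_const_nhds hconv
        (Eventually.of_forall fun n => (hx n).1)
    · exact le_of_tendsto hconv (Eventually.of_forall fun n => (hx n).2)
  have hflim_meas : AEMeasurable flim μ :=
    aemeasurable_of_tendsto_metrizable_ae atTop (fun n => (hfmeas n).aemeasurable) hfconv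
  -- the sequence of Lp elements
  set G : ℕ → Lp ℝ 2 μ := fun n => (hg n).toLp (g n) with hGdef
  have hinner : ∀ (n : ℕ) (Z : Lp ℝ 2 μ),
      (innerSL ℝ (G n)) Z = ∫ x, g n x * Z x ∂μ := by
    intro n Z
    rw [innerSL_apply_apply, L2.inner_def]
    refine integral_congr_ae ?_
    filter_upwards [(hg n).coeFn_toLp] with x hx
    simp [hGdef, hx, RCLike.inner_apply, mul_comm]
  -- uniform boundedness of the g_n in L²
  obtain ⟨M₀, hM₀⟩ : ∃ M₀ : ℝ, ∀ n, ‖innerSL ℝ (G n)‖ ≤ M₀ := by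
    apply banach_steinhaus
    intro Z
    have ht := hgweak (⇑Z) (Lp.memLp Z)
    have hbdd := ht.norm.bddAbove_range
    obtain ⟨c, hc⟩ := hbdd
    refine ⟨c, fun n => ?_⟩
    rw [hinner n Z]
    exact hc ⟨n, rfl⟩
  set M : ℝ := max M₀ 0 with hMdef
  have hM : 0 ≤ M := le_max_right _ _
  have hGnorm : ∀ n, ‖G n‖ ≤ M := by
    intro n
    rw [← innerSL_apply_norm (𝕜 := ℝ)]
    exact le_trans (hM₀ n) (le_max_left _ _)
  -- Cauchy-Schwarz bound
  have hCS : ∀ (n : ℕ) (h : X → ℝ) (hh : MemLp h 2 μ),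
      |∫ x, g n x * h x ∂μ| ≤ M * ‖hh.toLp h‖ := by
    intro n h hh
    have h1 : ∫ x, g n x * h x ∂μ = @inner ℝ _ _ (G n) (hh.toLp h) :=
      (memL2_inner_eq (hg n) hh).symm
    rw [h1]
    calc |@inner ℝ _ _ (G n) (hh.toLp h)| ≤ ‖G n‖ * ‖hh.toLp h‖ :=
          abs_real_inner_le_norm _ _
      _ ≤ M * ‖hh.toLp h‖ :=
          mul_le_mul_of_nonneg_right (hGnorm n) (norm_nonneg _)
  set L : ℝ := ∫ x, flim x * (glim x) ^ 2 ∂μ with hLdef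
  -- ζ := flim * glim is in L²
  have hζmeas : AEStronglyMeasurable (fun x => flim x * glim x) μ :=
    (hflim_meas.aestronglyMeasurable).mul hglim.1
  have hζ : MemLp (fun x => flim x * glim x) 2 μ := by
    refine MemLp.of_le_mul (c := C) hglim hζmeas ?_
    filter_upwards [hflim_bd] with x hx
    rw [norm_mul]
    exact mul_le_mul_of_nonneg_right (abs_le.2 ⟨by linarith [hx.1], hx.2⟩) (norm_nonneg _)
  -- h n := (f n - flim) * glim is in L²
  have hhmeas : ∀ n, AEStronglyMeasurable (fun x => (f n x - flim x) * glim x) μ :=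
    fun n => (((hfmeas n).aemeasurable.sub hflim_meas).aestronglyMeasurable).mul hglim.1
  have hh : ∀ n, MemLp (fun x => (f n x - flim x) * glim x) 2 μ := by
    intro n
    refine MemLp.of_le_mul (c := 2 * C) hglim (hhmeas n) ?_
    filter_upwards [hflim_bd, hfbd n] with x hx hx'
    rw [norm_mul]
    refine mul_le_mul_of_nonneg_right ?_ (norm_nonneg _)
    rw [Real.norm_eq_abs, abs_sub_le_iff]
    constructor <;> [skip; skip] <;>
      · nlinarith [hx.1, hx.2, hx'.1, hx'.2]
  -- T1: using weak convergence against ζ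
  have hT1 : Tendsto (fun n => ∫ x, g n x * (flim x * glim x) ∂μ) atTop (nhds L) := by
    have := hgweak _ hζ
    have heq : ∫ x, glim x * (flim x * glim x) ∂μ = L := by
      rw [hLdef]
      refine integral_congr_ae (Eventually.of_forall fun x => ?_)
      ring
    rwa [heq] at this
  -- T2: error term tends to 0
  have hsq : Tendsto (fun n => ∫ x, ((f n x - flim x) * glim x) ^ 2 ∂μ) atTop
      (nhds (∫ x, (0 : ℝ) ∂μ)) := by
    refine tendsto_integral_of_dominated_convergence (fun x => (2 * C) ^ 2 * glim x ^ 2)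
      (fun n => ((hh n).1.aemeasurable.pow_const 2).aestronglyMeasurable)
      (hglim.integrable_sq.const_mul ((2 * C) ^ 2)) ?_ ?_
    · intro n
      filter_upwards [hflim_bd, hfbd n] with x hx hx'
      have h1 : |f n x - flim x| ≤ 2 * C := by
        rw [abs_sub_le_iff]; constructor <;> nlinarith [hx.1, hx.2, hx'.1, hx'.2]
      have h2 : ((f n x - flim x) * glim x) ^ 2 ≤ (2 * C) ^ 2 * glim x ^ 2 := by
        rw [mul_pow]
        refine mul_le_mul_of_nonneg_right ?_ (sq_nonneg _)
        rw [← sq_abs]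
        exact pow_le_pow_left₀ (abs_nonneg _) h1 2
      rw [Real.norm_eq_abs, abs_of_nonneg (sq_nonneg _)]
      exact h2
    · filter_upwards [hfconv] with x hx
      have : Tendsto (fun n => ((f n x - flim x) * glim x) ^ 2) atTop
          (nhds (((flim x - flim x) * glim x) ^ 2)) :=
        (((hx.sub tendsto_const_nhds).mul_const (glim x)).pow 2)
      simpa using this
  have hsq0 : Tendsto (fun n => ∫ x, ((f n x - flim x) * glim x) ^ 2 ∂μ) atTop (nhds 0) := by
    simpa using hsq
  have hnormH : ∀ n, ‖(hh n).toLp _‖ =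
      Real.sqrt (∫ x, ((f n x - flim x) * glim x) ^ 2 ∂μ) := by
    intro n
    have h1 : (∫ x, ((f n x - flim x) * glim x) * ((f n x - flim x) * glim x) ∂μ)
        = @inner ℝ _ _ ((hh n).toLp _) ((hh n).toLp _) := (memL2_inner_eq (hh n) (hh n)).symm
    have h2 : @inner ℝ _ _ ((hh n).toLp _) ((hh n).toLp _) = ‖(hh n).toLp _‖ ^ 2 :=
      real_inner_self_eq_norm_sq _
    have h3 : ∫ x, ((f n x - flim x) * glim x) ^ 2 ∂μ = ‖(hh n).toLp _‖ ^ 2 := by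
      rw [← h2, ← h1]
      refine integral_congr_ae (Eventually.of_forall fun x => ?_); ring
    rw [h3, Real.sqrt_sq (norm_nonneg _)]
  have hT2 : Tendsto (fun n => ∫ x, g n x * ((f n x - flim x) * glim x) ∂μ) atTop (nhds 0) := by
    refine squeeze_zero_norm (fun n => ?_)
      (show Tendsto (fun n => M * Real.sqrt (∫ x, ((f n x - flim x) * glim x) ^ 2 ∂μ))
        atTop (nhds 0) from ?_)
    · rw [Real.norm_eq_abs]
      calc |∫ x, g n x * ((f n x - flim x) * glim x) ∂μ| ≤ M * ‖(hh n).toLp _‖ :=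
            hCS n _ (hh n)
        _ = M * Real.sqrt (∫ x, ((f n x - flim x) * glim x) ^ 2 ∂μ) := by rw [hnormH n]
    · have : Tendsto (fun n => Real.sqrt (∫ x, ((f n x - flim x) * glim x) ^ 2 ∂μ)) atTop
          (nhds (Real.sqrt 0)) := (Real.continuous_sqrt.tendsto 0).comp hsq0
      have := this.const_mul M
      simpa using this
  -- T3: dominated convergence
  have hT3 : Tendsto (fun n => ∫ x, f n x * glim x ^ 2 ∂μ) atTop (nhds L) := by
    refine tendsto_integral_of_dominated_convergence (fun x => C * glim x ^ 2)
      (fun n => ((hfmeas n).aemeasurable.mul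
        (hglim.aestronglyMeasurable.aemeasurable.pow_const 2)).aestronglyMeasurable)
      (hglim.integrable_sq.const_mul C) ?_ ?_
    · intro n
      filter_upwards [hfbd n] with x hx
      rw [Real.norm_eq_abs, abs_mul, abs_of_nonneg hx.1, abs_of_nonneg (sq_nonneg _)]
      exact mul_le_mul_of_nonneg_right hx.2 (sq_nonneg _)
    · filter_upwards [hfconv] with x hx
      exact hx.mul_const _
  -- integrability facts
  have hI1 : ∀ n, Integrable (fun x => g n x * (flim x * glim x)) μ :=
    fun n => memL2_integrable_mul (hg n) hζ
  have hI2 : ∀ n, Integrable (fun x => g n x * ((f n x - flim x) * glim x)) μ :=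
    fun n => memL2_integrable_mul (hg n) (hh n)
  have hI3 : ∀ n, Integrable (fun x => f n x * glim x ^ 2) μ := by
    intro n
    refine (hglim.integrable_sq.const_mul C).mono'
      (((hfmeas n).aemeasurable.mul
        (hglim.aestronglyMeasurable.aemeasurable.pow_const 2)).aestronglyMeasurable) ?_
    filter_upwards [hfbd n] with x hx
    rw [Real.norm_eq_abs, abs_mul, abs_of_nonneg hx.1, abs_of_nonneg (sq_nonneg _)]
    exact mul_le_mul_of_nonneg_right hx.2 (sq_nonneg _)
  have hIu : ∀ n, Integrable (fun x => f n x * g n x ^ 2) μ := by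
    intro n
    refine ((hg n).integrable_sq.const_mul C).mono'
      (((hfmeas n).aemeasurable.mul
        ((hg n).aestronglyMeasurable.aemeasurable.pow_const 2)).aestronglyMeasurable) ?_
    filter_upwards [hfbd n] with x hx
    rw [Real.norm_eq_abs, abs_mul, abs_of_nonneg hx.1, abs_of_nonneg (sq_nonneg _)]
    exact mul_le_mul_of_nonneg_right hx.2 (sq_nonneg _)
  -- the lower-bound sequence
  set v : ℕ → ℝ := fun n => ∫ x, (2 * (g n x * (flim x * glim x))
    + 2 * (g n x * ((f n x - flim x) * glim x)) - f n x * glim x ^ 2) ∂μ with hvdef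
  have hIv : ∀ n, Integrable (fun x => 2 * (g n x * (flim x * glim x))
      + 2 * (g n x * ((f n x - flim x) * glim x)) - f n x * glim x ^ 2) μ :=
    fun n => (((hI1 n).const_mul 2).add ((hI2 n).const_mul 2)).sub (hI3 n)
  have hv_eq : ∀ n, v n = 2 * (∫ x, g n x * (flim x * glim x) ∂μ)
      + 2 * (∫ x, g n x * ((f n x - flim x) * glim x) ∂μ)
      - ∫ x, f n x * glim x ^ 2 ∂μ := by
    intro n
    simp only [hvdef]
    have hA : Integrable (fun x => 2 * (g n x * (flim x * glim x))) μ := (hI1 n).const_mul 2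
    have hB : Integrable (fun x => 2 * (g n x * ((f n x - flim x) * glim x))) μ :=
      (hI2 n).const_mul 2
    have hadd : Integrable (fun x => 2 * (g n x * (flim x * glim x))
        + 2 * (g n x * ((f n x - flim x) * glim x))) μ := by exact hA.add hB
    rw [integral_sub hadd (hI3 n), integral_add hA hB, integral_const_mul, integral_const_mul]
  -- v → L
  have hv_tendsto : Tendsto v atTop (nhds L) := by
    have h : Tendsto (fun n => 2 * (∫ x, g n x * (flim x * glim x) ∂μ)
        + 2 * (∫ x, g n x * ((f n x - flim x) * glim x) ∂μ)
        - ∫ x, f n x * glim x ^ 2 ∂μ) atTop (nhds (2 * L + 2 * 0 - L)) :=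
      ((hT1.const_mul 2).add (hT2.const_mul 2)).sub hT3
    have h2 : (2 : ℝ) * L + 2 * 0 - L = L := by ring
    rw [h2] at h
    refine h.congr fun n => (hv_eq n).symm
  -- v n ≤ u n
  have hvu : ∀ n, v n ≤ ∫ x, f n x * g n x ^ 2 ∂μ := by
    intro n
    refine integral_mono_ae (hIv n) (hIu n) ?_
    filter_upwards [hfbd n] with x hx
    nlinarith [mul_nonneg hx.1 (sq_nonneg (g n x - glim x))]
  -- u is bounded above by C * M ^ 2
  have hu_bd : ∀ n, (∫ x, f n x * g n x ^ 2 ∂μ) ≤ C * M ^ 2 := by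
    intro n
    have h1 : (∫ x, f n x * g n x ^ 2 ∂μ) ≤ ∫ x, C * g n x ^ 2 ∂μ := by
      refine integral_mono_ae (hIu n) ((hg n).integrable_sq.const_mul C) ?_
      filter_upwards [hfbd n] with x hx
      exact mul_le_mul_of_nonneg_right hx.2 (sq_nonneg _)
    have h2 : ∫ x, C * g n x ^ 2 ∂μ = C * ∫ x, g n x ^ 2 ∂μ := integral_const_mul _ _
    have h3 : ∫ x, g n x ^ 2 ∂μ = ‖G n‖ ^ 2 := by
      have ha : (∫ x, g n x * g n x ∂μ) = @inner ℝ _ _ (G n) (G n) :=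
        (memL2_inner_eq (hg n) (hg n)).symm
      have hb : @inner ℝ _ _ (G n) (G n) = ‖G n‖ ^ 2 := real_inner_self_eq_norm_sq _
      rw [← hb, ← ha]
      refine integral_congr_ae (Eventually.of_forall fun x => ?_); ring
    have h4 : ‖G n‖ ^ 2 ≤ M ^ 2 := pow_le_pow_left₀ (norm_nonneg _) (hGnorm n) 2
    calc (∫ x, f n x * g n x ^ 2 ∂μ) ≤ C * ∫ x, g n x ^ 2 ∂μ := h2 ▸ h1
      _ = C * ‖G n‖ ^ 2 := by rw [h3]
      _ ≤ C * M ^ 2 := mul_le_mul_of_nonneg_left h4 hC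
  -- conclude
  have h1 : L = Filter.atTop.liminf v := (hv_tendsto.liminf_eq).symm
  rw [h1]
  refine liminf_le_liminf (Eventually.of_forall hvu) ?_ ?_
  · exact hv_tendsto.isBoundedUnder_ge
  · exact isCoboundedUnder_ge_of_eventually_le _ (Eventually.of_forall hu_bd)
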